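/- Suppose every value in {1,…,K} is attained by z* and every value in {1,…,L} is attained by w*, and suppose μ* ∈ (0,∞)^{K×L} has pairwise distinct rows and pairwise distinct columns. If q^z is an m×K row-stochastic matrix, q^w is an n×L row-stochastic matrix, μ ∈ (0,∞)^{K×L}, and G(q^z, q^w, μ) = 0, then (q^z, q^w, μ) belongs to the equivalence class of (1^{z*}, 1^{w*}, μ*); that is, there exist permutations s of {1,…,K} and t of {1,…,L} with q^z_{ik} = 1(z*_i = s(k)) for all i,k, q^w_{jl} = 1(w*_j = t(l)) for all j,l, and μ_{kl} = μ*_{s(k),t(l)} for all k,l. -/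
import Mathlib


open scoped BigOperators

namespace DCLBM

/-- The indicator (hard-assignment) matrix `1^{z}` of a label vector `z`. -/
noncomputable def indic {m K : ℕ} (z : Fin m → Fin K) : Fin m → Fin K → ℝ :=
  fun i k => if z i = k then 1 else 0

/-- The soft confusion matrix `R_{kk'}(q, q̃) = (1/m) Σ_i q_{ik} q̃_{ik'}`. -/
noncomputable def Rmat {m K : ℕ} (q qt : Fin m → Fin K → ℝ) (k k' : Fin K) : ℝ :=
  (1 / (m : ℝ)) * ∑ i, q i k * qt i k'

/-- The Poisson Kullback–Leibler divergence `KL(a, b) = a log(a/b) - (a - b)`. -/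
noncomputable def KLdiv (a b : ℝ) : ℝ := a * Real.log (a / b) - (a - b)

/-- The population separation functional
`G(q^z, q^w, μ) = Σ_{k,l,k',l'} R_{kk'}(1^{z*}, q^z) R_{ll'}(1^{w*}, q^w) KL(μ*_{kl}, μ_{k'l'})`. -/
noncomputable def Gfun {m n K L : ℕ} (zs : Fin m → Fin K) (ws : Fin n → Fin L)
    (μs : Fin K → Fin L → ℝ)
    (qz : Fin m → Fin K → ℝ) (qw : Fin n → Fin L → ℝ) (μm : Fin K → Fin L → ℝ) : ℝ :=
  ∑ k, ∑ l, ∑ k', ∑ l',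
    Rmat (indic zs) qz k k' * Rmat (indic ws) qw l l' * KLdiv (μs k l) (μm k' l')

/-- The distance between two triples `(q^z, q^w, μ)` and `(q̃^z, q̃^w, μ̃)`. -/
noncomputable def distTriple {m n K L : ℕ}
    (qz : Fin m → Fin K → ℝ) (qw : Fin n → Fin L → ℝ) (μm : Fin K → Fin L → ℝ)
    (qz' : Fin m → Fin K → ℝ) (qw' : Fin n → Fin L → ℝ) (μm' : Fin K → Fin L → ℝ) : ℝ :=
  (1 - ∑ k, Rmat qz qz' k k) + (1 - ∑ l, Rmat qw qw' l l) +
    ∑ k, ∑ l, |μm k l - μm' k l|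

/-- A matrix is row-stochastic if its entries lie in `[0,1]` and each row sums to `1`. -/
def RowStoch {m K : ℕ} (q : Fin m → Fin K → ℝ) : Prop :=
  (∀ i k, 0 ≤ q i k ∧ q i k ≤ 1) ∧ (∀ i, ∑ k, q i k = 1)

end DCLBM

open DCLBM Finset

lemma aux_KLdiv_nonneg {a b : ℝ} (ha : 0 < a) (hb : 0 < b) : 0 ≤ KLdiv a b := by
  have h1 : Real.log (b / a) ≤ b / a - 1 := Real.log_le_sub_one_of_pos (div_pos hb ha)
  have h2 : Real.log (a / b) = -Real.log (b / a) := by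
    rw [Real.log_div ha.ne' hb.ne', Real.log_div hb.ne' ha.ne']; ring
  have h3 : a * (b / a - 1) = b - a := by field_simp
  have h4 : a * Real.log (b / a) ≤ b - a := by
    calc a * Real.log (b / a) ≤ a * (b / a - 1) := mul_le_mul_of_nonneg_left h1 ha.le
      _ = b - a := h3
  unfold KLdiv
  rw [h2]; nlinarith

lemma aux_KLdiv_pos {a b : ℝ} (ha : 0 < a) (hb : 0 < b) (hne : a ≠ b) : 0 < KLdiv a b := by
  have hne' : b / a ≠ 1 := by
    intro h
    exact hne ((div_eq_one_iff_eq ha.ne').mp h).symm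
  have h1 : Real.log (b / a) < b / a - 1 := Real.log_lt_sub_one_of_pos (div_pos hb ha) hne'
  have h2 : Real.log (a / b) = -Real.log (b / a) := by
    rw [Real.log_div ha.ne' hb.ne', Real.log_div hb.ne' ha.ne']; ring
  have h3 : a * (b / a - 1) = b - a := by field_simp
  have h4 : a * Real.log (b / a) < b - a := by
    calc a * Real.log (b / a) < a * (b / a - 1) := by
          exact (mul_lt_mul_iff_right₀ ha).mpr h1
      _ = b - a := h3
  unfold KLdiv
  rw [h2]; nlinarith

lemma aux_indic_nonneg {m K : ℕ} (z : Fin m → Fin K) (i : Fin m) (k : Fin K) :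
    0 ≤ indic z i k := by
  unfold indic; split <;> norm_num

lemma aux_Rmat_nonneg {m K : ℕ} (z : Fin m → Fin K) (q : Fin m → Fin K → ℝ)
    (hq : ∀ i k, 0 ≤ q i k) (k k' : Fin K) : 0 ≤ Rmat (indic z) q k k' := by
  unfold Rmat
  apply mul_nonneg (by positivity)
  exact sum_nonneg fun i _ => mul_nonneg (aux_indic_nonneg z i k) (hq i k')

lemma aux_exists_pos {m K : ℕ} (hm : 0 < m) (z : Fin m → Fin K)
    (hz : Function.Surjective z) (q : Fin m → Fin K → ℝ) (hq : RowStoch q) (k : Fin K) :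
    ∃ k', 0 < Rmat (indic z) q k k' := by
  by_contra h
  push_neg at h
  have hsum : ∑ k', Rmat (indic z) q k k' ≤ 0 := sum_nonpos fun k' _ => h k'
  have hcalc : ∑ k', Rmat (indic z) q k k' = (1 / (m : ℝ)) * ∑ i, indic z i k := by
    unfold Rmat
    rw [← Finset.mul_sum]
    congr 1
    rw [Finset.sum_comm]
    refine Finset.sum_congr rfl fun i _ => ?_
    rw [← Finset.mul_sum, hq.2 i, mul_one]
  obtain ⟨i0, hi0⟩ := hz k
  have h1 : (1 : ℝ) ≤ ∑ i, indic z i k := by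
    have := Finset.single_le_sum (f := fun i => indic z i k)
      (fun i _ => aux_indic_nonneg z i k) (Finset.mem_univ i0)
    simpa [indic, hi0] using this
  have hm' : 0 < (1 / (m : ℝ)) := by positivity
  nlinarith

lemma aux_perm {m K : ℕ} (hm : 0 < m) (z : Fin m → Fin K)
    (hz : Function.Surjective z) (q : Fin m → Fin K → ℝ) (hq : RowStoch q)
    (huniq : ∀ k1 k2 k', 0 < Rmat (indic z) q k1 k' → 0 < Rmat (indic z) q k2 k' → k1 = k2) :
    ∃ s : Equiv.Perm (Fin K), (∀ i k, q i k = if z i = s k then 1 else 0) ∧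
      ∀ k', 0 < Rmat (indic z) q (s k') k' := by
  classical
  have hpos : ∀ k, ∃ k', 0 < Rmat (indic z) q k k' := aux_exists_pos hm z hz q hq
  set f : Fin K → Fin K := fun k => Classical.choose (hpos k) with hf
  have hfpos : ∀ k, 0 < Rmat (indic z) q k (f k) := fun k => Classical.choose_spec (hpos k)
  have hfinj : Function.Injective f := by
    intro k1 k2 h
    exact huniq k1 k2 (f k1) (hfpos k1) (h ▸ hfpos k2)
  have hfbij : Function.Bijective f := Finite.injective_iff_bijective.mp hfinj
  set e := Equiv.ofBijective f hfbij with he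
  set s := e.symm with hs
  have hspos : ∀ k', 0 < Rmat (indic z) q (s k') k' := by
    intro k'
    have h : f (s k') = k' := e.apply_symm_apply k'
    have h2 := hfpos (s k')
    rwa [h] at h2
  have hchar : ∀ k k', 0 < Rmat (indic z) q k k' → k = s k' :=
    fun k k' h => huniq k (s k') k' h (hspos k')
  have hzero : ∀ (i : Fin m) (k' : Fin K), z i ≠ s k' → q i k' = 0 := by
    intro i k' hne
    have hR0 : Rmat (indic z) q (z i) k' = 0 := by
      by_contra h
      exact hne (hchar (z i) k'
        (lt_of_le_of_ne (aux_Rmat_nonneg z q (fun i k => (hq.1 i k).1) (z i) k') (Ne.symm h)))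
    unfold Rmat at hR0
    have hm' : (1 / (m : ℝ)) ≠ 0 := by positivity
    have hsum0 : ∑ j, indic z j (z i) * q j k' = 0 := by
      rcases mul_eq_zero.mp hR0 with h | h
      · exact absurd h hm'
      · exact h
    have hterm := (Finset.sum_eq_zero_iff_of_nonneg
      (fun j _ => mul_nonneg (aux_indic_nonneg z j (z i)) (hq.1 j k').1)).mp hsum0 i
      (Finset.mem_univ i)
    simpa [indic] using hterm
  refine ⟨s, ?_, hspos⟩
  intro i k
  by_cases hik : z i = s k
  · simp only [hik, if_pos rfl]
    have hrow := hq.2 i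
    have hsingle : ∑ k', q i k' = q i k := by
      refine Finset.sum_eq_single k (fun b _ hb => ?_) (fun h => absurd (Finset.mem_univ k) h)
      apply hzero
      intro hb'
      exact hb (s.injective (hik ▸ hb' ▸ rfl))
    rw [hsingle] at hrow
    exact hrow
  · simp only [if_neg hik]
    exact hzero i k hik


/-- if `z*` and `w*` are surjective, `μ*` has pairwise distinct rows and
columns, and `G(q^z, q^w, μ) = 0` for row-stochastic `q^z, q^w` and positive `μ`, then
`(q^z, q^w, μ)` lies in the equivalence class of `(1^{z*}, 1^{w*}, μ*)`. -/
theorem statement15 (m n K L : ℕ) (hm : 0 < m) (hn : 0 < n) (hK : 0 < K) (hL : 0 < L)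
    (zs : Fin m → Fin K) (ws : Fin n → Fin L)
    (hzsurj : Function.Surjective zs) (hwsurj : Function.Surjective ws)
    (μs : Fin K → Fin L → ℝ) (hμs : ∀ k l, 0 < μs k l)
    (hrows : ∀ k k' : Fin K, k ≠ k' → ∃ l, μs k l ≠ μs k' l)
    (hcols : ∀ l l' : Fin L, l ≠ l' → ∃ k, μs k l ≠ μs k l')
    (qz : Fin m → Fin K → ℝ) (qw : Fin n → Fin L → ℝ) (μm : Fin K → Fin L → ℝ)
    (hqz : DCLBM.RowStoch qz) (hqw : DCLBM.RowStoch qw) (hμm : ∀ k l, 0 < μm k l)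
    (hG : DCLBM.Gfun zs ws μs qz qw μm = 0) :
    ∃ (s : Equiv.Perm (Fin K)) (t : Equiv.Perm (Fin L)),
      (∀ i k, qz i k = if zs i = s k then 1 else 0) ∧
      (∀ j l, qw j l = if ws j = t l then 1 else 0) ∧
      (∀ k l, μm k l = μs (s k) (t l)) := by
  classical
  have hqznn : ∀ i k, 0 ≤ qz i k := fun i k => (hqz.1 i k).1
  have hqwnn : ∀ j l, 0 ≤ qw j l := fun j l => (hqw.1 j l).1
  have hterm_nonneg : ∀ (k : Fin K) (l : Fin L) (k' : Fin K) (l' : Fin L),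
      0 ≤ DCLBM.Rmat (DCLBM.indic zs) qz k k' * DCLBM.Rmat (DCLBM.indic ws) qw l l' *
        DCLBM.KLdiv (μs k l) (μm k' l') := by
    intro k l k' l'
    exact mul_nonneg (mul_nonneg (aux_Rmat_nonneg zs qz hqznn k k')
      (aux_Rmat_nonneg ws qw hqwnn l l')) (aux_KLdiv_nonneg (hμs k l) (hμm k' l'))
  unfold DCLBM.Gfun at hG
  have hzero : ∀ (k : Fin K) (l : Fin L) (k' : Fin K) (l' : Fin L),
      DCLBM.Rmat (DCLBM.indic zs) qz k k' * DCLBM.Rmat (DCLBM.indic ws) qw l l' *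
        DCLBM.KLdiv (μs k l) (μm k' l') = 0 := by
    intro k l k' l'
    have h1 := (Finset.sum_eq_zero_iff_of_nonneg (fun k _ =>
      Finset.sum_nonneg fun l _ => Finset.sum_nonneg fun k' _ =>
        Finset.sum_nonneg fun l' _ => hterm_nonneg k l k' l')).mp hG k (Finset.mem_univ k)
    have h2 := (Finset.sum_eq_zero_iff_of_nonneg (fun l _ =>
      Finset.sum_nonneg fun k' _ =>
        Finset.sum_nonneg fun l' _ => hterm_nonneg k l k' l')).mp h1 l (Finset.mem_univ l)
    have h3 := (Finset.sum_eq_zero_iff_of_nonneg (fun k' _ =>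
      Finset.sum_nonneg fun l' _ => hterm_nonneg k l k' l')).mp h2 k' (Finset.mem_univ k')
    exact (Finset.sum_eq_zero_iff_of_nonneg (fun l' _ =>
      hterm_nonneg k l k' l')).mp h3 l' (Finset.mem_univ l')
  have hKLeq : ∀ (k : Fin K) (l : Fin L) (k' : Fin K) (l' : Fin L),
      0 < DCLBM.Rmat (DCLBM.indic zs) qz k k' → 0 < DCLBM.Rmat (DCLBM.indic ws) qw l l' →
        μm k' l' = μs k l := by
    intro k l k' l' hz hw
    by_contra hne
    have hKLpos : 0 < DCLBM.KLdiv (μs k l) (μm k' l') :=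
      aux_KLdiv_pos (hμs k l) (hμm k' l') (fun h => hne h.symm)
    have := hzero k l k' l'
    nlinarith [mul_pos (mul_pos hz hw) hKLpos]
  have huniqz : ∀ k1 k2 k', 0 < DCLBM.Rmat (DCLBM.indic zs) qz k1 k' →
      0 < DCLBM.Rmat (DCLBM.indic zs) qz k2 k' → k1 = k2 := by
    intro k1 k2 k' h1 h2
    by_contra hne
    obtain ⟨l, hl⟩ := hrows k1 k2 hne
    obtain ⟨l', hl'⟩ := aux_exists_pos hn ws hwsurj qw hqw l
    have e1 := hKLeq k1 l k' l' h1 hl'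
    have e2 := hKLeq k2 l k' l' h2 hl'
    exact hl (e1 ▸ e2 ▸ rfl)
  have huniqw : ∀ l1 l2 l', 0 < DCLBM.Rmat (DCLBM.indic ws) qw l1 l' →
      0 < DCLBM.Rmat (DCLBM.indic ws) qw l2 l' → l1 = l2 := by
    intro l1 l2 l' h1 h2
    by_contra hne
    obtain ⟨k, hk⟩ := hcols l1 l2 hne
    obtain ⟨k', hk'⟩ := aux_exists_pos hm zs hzsurj qz hqz k
    have e1 := hKLeq k l1 k' l' hk' h1
    have e2 := hKLeq k l2 k' l' hk' h2
    exact hk (e1 ▸ e2 ▸ rfl)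
  obtain ⟨s, hs_eq, hs_pos⟩ := aux_perm hm zs hzsurj qz hqz huniqz
  obtain ⟨t, ht_eq, ht_pos⟩ := aux_perm hn ws hwsurj qw hqw huniqw
  exact ⟨s, t, hs_eq, ht_eq, fun k l => hKLeq (s k) (t l) k l (hs_pos k) (ht_pos l)⟩
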